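/- For every n×n real symmetric positive-semidefinite matrix C and integer 0 < s < n, the scaled linx bound tends to +∞ as the scaling parameter tends to 0 from above: lim_{γ→0⁺} linx(C,s;γ) = +∞. -/

import Mathlib

open Matrix Real Set Filter

noncomputable section

/-- The feasible polytope `P(n,s)`. -/
def PP (n s : ℕ) : Set (Fin n → ℝ) :=
  {x | (∑ i, x i) = (s : ℝ) ∧ ∀ i, 0 ≤ x i ∧ x i ≤ 1}

/-- The scaled linx objective `f(C,s;γ;x)`. -/
def fLinxScaled {n : ℕ} (C : Matrix (Fin n) (Fin n) ℝ) (s : ℕ) (γ : ℝ) (x : Fin n → ℝ) : ℝ :=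
  (1 / 2) * (Real.log ((γ • (C * Matrix.diagonal x * C) + Matrix.diagonal fun i => 1 - x i).det)
    - (s : ℝ) * Real.log γ)

/-- The scaled linx bound `linx(C,s;γ)`. -/
def linxScaled (n s : ℕ) (C : Matrix (Fin n) (Fin n) ℝ) (γ : ℝ) : ℝ :=
  sSup (fLinxScaled C s γ '' PP n s)

lemma log_le_abs (t : ℝ) : Real.log t ≤ |t| := by
  rcases eq_or_ne t 0 with h | h
  · simp [h]
  · rw [← Real.log_abs]
    have h1 : 0 < |t| := abs_pos.mpr h
    linarith [Real.log_le_sub_one_of_pos h1]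

theorem stmt_16 (n s : ℕ) (hs : 0 < s) (hsn : s < n)
    (C : Matrix (Fin n) (Fin n) ℝ) (hC : C.PosSemidef) :
    Filter.Tendsto (fun γ : ℝ => linxScaled n s C γ)
      (nhdsWithin 0 (Set.Ioi 0)) Filter.atTop := by
  have hn : (0:ℝ) < n := by exact_mod_cast hs.trans hsn
  set x₀ : Fin n → ℝ := fun _ => (s : ℝ) / n with hx₀
  have hx01 : (s : ℝ) / n < 1 := by
    rw [div_lt_one hn]; exact_mod_cast hsn
  have hx00 : 0 ≤ (s : ℝ) / n := by positivity
  have hx₀mem : x₀ ∈ PP n s := by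
    constructor
    · simp [hx₀, Finset.sum_const, Finset.card_univ]
      field_simp
    · intro i; exact ⟨hx00, hx01.le⟩
  -- continuity of the matrix map in x (for fixed γ)
  have hMcont : ∀ γ : ℝ, Continuous fun x : Fin n → ℝ =>
      (γ • (C * Matrix.diagonal x * C) + Matrix.diagonal fun i => 1 - x i).det := by
    intro γ
    apply Continuous.matrix_det
    apply Continuous.add
    · apply Continuous.fun_const_smul
      apply Continuous.matrix_mul
      apply Continuous.matrix_mul continuous_const
      · apply continuous_matrix
        intro i j
        simp only [Matrix.diagonal]
        by_cases h : i = j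
        · simp [h]; exact continuous_apply j
        · simp [h]; exact continuous_const
      · exact continuous_const
    · apply continuous_matrix
      intro i j
      simp only [Matrix.diagonal]
      by_cases h : i = j
      · simp [h]; exact (continuous_const.sub (continuous_apply j))
      · simp [h]; exact continuous_const
  -- PP is compact
  have hPPc : IsCompact (PP n s) := by
    have hsub : PP n s ⊆ Set.Icc (0 : Fin n → ℝ) 1 := by
      rintro x ⟨-, hx⟩
      exact ⟨fun i => (hx i).1, fun i => (hx i).2⟩
    have hclosed : IsClosed (PP n s) := by
      have h1 : IsClosed {x : Fin n → ℝ | (∑ i, x i) = (s : ℝ)} :=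
        isClosed_eq (by continuity) continuous_const
      have h2 : IsClosed {x : Fin n → ℝ | ∀ i, 0 ≤ x i ∧ x i ≤ 1} := by
        have : {x : Fin n → ℝ | ∀ i, 0 ≤ x i ∧ x i ≤ 1} =
            ⋂ i, ({x : Fin n → ℝ | 0 ≤ x i} ∩ {x | x i ≤ 1}) := by
          ext x; simp [Set.mem_iInter, forall_and]
        rw [this]
        exact isClosed_iInter fun i =>
          (isClosed_le continuous_const (continuous_apply i)).inter
            (isClosed_le (continuous_apply i) continuous_const)
      exact h1.inter h2
    exact (isCompact_Icc).of_isClosed_subset hclosed hsub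
  -- BddAbove of image for each γ
  have hbdd : ∀ γ : ℝ, BddAbove (fLinxScaled C s γ '' PP n s) := by
    intro γ
    obtain ⟨K, hK⟩ := (hPPc.bddAbove_image ((hMcont γ).abs.continuousOn))
    refine ⟨(1/2) * (K - (s:ℝ) * Real.log γ), ?_⟩
    rintro y ⟨x, hx, rfl⟩
    have h1 : Real.log ((γ • (C * Matrix.diagonal x * C) +
        Matrix.diagonal fun i => 1 - x i).det) ≤ K := by
      refine (log_le_abs _).trans ?_
      exact hK (Set.mem_image_of_mem _ hx)
    unfold fLinxScaled
    nlinarith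
  -- tendsto of f at x₀
  have hdet0 : Tendsto (fun γ : ℝ =>
      (γ • (C * Matrix.diagonal x₀ * C) + Matrix.diagonal fun i => 1 - x₀ i).det)
      (nhds 0) (nhds ((1 - (s:ℝ)/n) ^ n)) := by
    have hc : Continuous fun γ : ℝ =>
        (γ • (C * Matrix.diagonal x₀ * C) + Matrix.diagonal fun i => 1 - x₀ i).det := by
      apply Continuous.matrix_det
      exact (continuous_id.smul continuous_const).add continuous_const
    have h0 : ((0:ℝ) • (C * Matrix.diagonal x₀ * C) +
        Matrix.diagonal fun i => 1 - x₀ i).det = (1 - (s:ℝ)/n) ^ n := by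
      simp [Matrix.det_diagonal, hx₀]
    have := hc.tendsto 0
    rwa [h0] at this
  have hpos : (0:ℝ) < (1 - (s:ℝ)/n) ^ n := by
    have h1 : (0:ℝ) < 1 - (s:ℝ)/n := by linarith
    positivity
  have hlog : Tendsto (fun γ : ℝ => Real.log ((γ • (C * Matrix.diagonal x₀ * C) +
      Matrix.diagonal fun i => 1 - x₀ i).det)) (nhdsWithin 0 (Set.Ioi 0))
      (nhds (Real.log ((1 - (s:ℝ)/n) ^ n))) :=
    ((Real.continuousAt_log hpos.ne').tendsto.comp (hdet0.mono_left nhdsWithin_le_nhds))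
  have hlogγ : Tendsto (fun γ : ℝ => -((s:ℝ) * Real.log γ)) (nhdsWithin 0 (Set.Ioi 0)) atTop := by
    have h1 : Tendsto (fun γ : ℝ => (s:ℝ) * Real.log γ) (nhdsWithin 0 (Set.Ioi 0)) atBot := by
      apply Filter.Tendsto.const_mul_atBot (by exact_mod_cast hs : (0:ℝ) < s)
      exact Real.tendsto_log_nhdsGT_zero
    exact tendsto_neg_atTop_iff.mpr h1
  have hf : Tendsto (fun γ : ℝ => fLinxScaled C s γ x₀) (nhdsWithin 0 (Set.Ioi 0)) atTop := by
    unfold fLinxScaled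
    apply Tendsto.const_mul_atTop (by norm_num : (0:ℝ) < 1/2)
    simp only [sub_eq_add_neg]
    exact hlog.add_atTop hlogγ
  refine tendsto_atTop_mono (fun γ => ?_) hf
  exact le_csSup (hbdd γ) (Set.mem_image_of_mem _ hx₀mem)
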